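/- Let L be a positive definite integral lattice and let s be a eutactic star on L. For fixed τ ∈ ℍ, if x ∈ L' is a nonzero vector such that the hyperplane {𝔷 : (x, 𝔷) = 0} is contained in the zero set ⋃_j {𝔷 : (s_j, 𝔷) ∈ ℤτ + ℤ} of Θ_s(τ, ·), then x is proportional over ℚ to some s_j. -/
import Mathlib


open Finset

private lemma stmt16_uncountableC : Uncountable ℂ :=
  Complex.ofReal_injective.uncountable

/-- Avoidance lemma: if for each `jj` there is a vector in the hyperplane `c ⬝ v = 0`
where the functional `d jj` doesn't vanish, then there is a single vector in the
hyperplane where all the `d jj` don't vanish. -/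
private lemma stmt16_avoid {l N : ℕ} (c : Fin l → ℂ) (d : Fin N → Fin l → ℂ)
    (h : ∀ jj, ∃ v : Fin l → ℂ, (∑ j, c j * v j) = 0 ∧ (∑ j, d jj j * v j) ≠ 0) :
    ∃ v : Fin l → ℂ, (∑ j, c j * v j) = 0 ∧ ∀ jj, (∑ j, d jj j * v j) ≠ 0 := by
  suffices H : ∀ S : Finset (Fin N), ∃ v : Fin l → ℂ,
      (∑ j, c j * v j) = 0 ∧ ∀ jj ∈ S, (∑ j, d jj j * v j) ≠ 0 by
    obtain ⟨v, hv0, hv⟩ := H Finset.univ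
    exact ⟨v, hv0, fun jj => hv jj (Finset.mem_univ _)⟩
  intro S
  induction S using Finset.induction_on with
  | empty => exact ⟨0, by simp, by simp⟩
  | @insert a S ha ih =>
    obtain ⟨v, hv0, hv⟩ := ih
    obtain ⟨w, hw0, hw⟩ := h a
    obtain ⟨t, ht⟩ := Infinite.exists_notMem_finset
      ((insert a S).image fun i => -(∑ j, d i j * v j) / (∑ j, d i j * w j))
    have expand : ∀ e : Fin l → ℂ,
        (∑ j, e j * (v j + t * w j)) = (∑ j, e j * v j) + t * (∑ j, e j * w j) := by
      intro e
      rw [Finset.mul_sum, ← Finset.sum_add_distrib]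
      exact Finset.sum_congr rfl fun j _ => by ring
    refine ⟨fun j => v j + t * w j, by rw [expand, hv0, hw0]; ring, ?_⟩
    intro i hi
    rw [expand]
    by_cases hDw : (∑ j, d i j * w j) = 0
    · rw [hDw, mul_zero, add_zero]
      rcases Finset.mem_insert.mp hi with rfl | hiS
      · exact absurd hDw hw
      · exact hv i hiS
    · intro heq
      apply ht
      refine Finset.mem_image.mpr ⟨i, hi, ?_⟩
      field_simp
      linear_combination -heq

/-- Let `s` be a eutactic star on a positive definite integral lattice `L`
(Gram matrix `G`). For fixed `τ ∈ ℍ`, if `x ∈ L'` is a nonzero vector such that the complex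
hyperplane `{𝔷 : (x, 𝔷) = 0}` is contained in the zero set
`⋃_j {𝔷 : (s_j, 𝔷) ∈ ℤτ + ℤ}` of `Θ_s(τ, ·)`, then `x` is proportional over `ℚ` to some
`s_j`. -/
theorem stmt_16 {l N : ℕ} (G : Matrix (Fin l) (Fin l) ℤ) (hGsymm : G.IsSymm)
    (hGpos : ∀ x : Fin l → ℚ, x ≠ 0 → 0 < ∑ i, ∑ j, (G i j : ℚ) * x i * x j)
    (s : Fin N → (Fin l → ℚ)) (hs0 : ∀ jj, s jj ≠ 0)
    (hdual : ∀ jj, ∀ x : Fin l → ℤ,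
      ∃ k : ℤ, ∑ i, ∑ j, (G i j : ℚ) * s jj i * (x j : ℚ) = (k : ℚ))
    (heut : ∀ x : Fin l → ℤ,
      ∑ jj, (∑ i, ∑ j, (G i j : ℚ) * s jj i * (x j : ℚ)) ^ 2
        = ∑ i, ∑ j, (G i j : ℚ) * (x i : ℚ) * (x j : ℚ))
    (τ : ℂ) (hτ : 0 < τ.im)
    (x : Fin l → ℚ) (hx : x ≠ 0)
    (hcover : ∀ 𝔷 : Fin l → ℂ,
      (∑ i, ∑ j, (G i j : ℂ) * ((x i : ℚ) : ℂ) * 𝔷 j) = 0 →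
      ∃ jj : Fin N, ∃ a b : ℤ,
        (∑ i, ∑ j, (G i j : ℂ) * ((s jj i : ℚ) : ℂ) * 𝔷 j) = (a : ℂ) * τ + (b : ℂ)) :
    ∃ jj : Fin N, ∃ t : ℚ, t ≠ 0 ∧ x = t • s jj := by
  classical
  -- the coefficient vectors of the linear forms `𝔷 ↦ (x, 𝔷)` and `𝔷 ↦ (s jj, 𝔷)`
  set c : Fin l → ℚ := fun j => ∑ i, (G i j : ℚ) * x i with hc
  set d : Fin N → Fin l → ℚ := fun jj j => ∑ i, (G i j : ℚ) * s jj i with hd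
  -- rewriting the double sums, over ℚ
  have hsumQ : ∀ y z : Fin l → ℚ,
      (∑ i, ∑ j, (G i j : ℚ) * y i * z j) = ∑ j, (∑ i, (G i j : ℚ) * y i) * z j := by
    intro y z
    rw [Finset.sum_comm]
    exact Finset.sum_congr rfl fun j _ => by rw [← Finset.sum_mul]
  -- rewriting the double sums, over ℂ
  have hsumC : ∀ (y : Fin l → ℚ) (z : Fin l → ℂ),
      (∑ i, ∑ j, (G i j : ℂ) * ((y i : ℚ) : ℂ) * z j)
        = ∑ j, ((∑ i, (G i j : ℚ) * y i : ℚ) : ℂ) * z j := by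
    intro y z
    rw [Finset.sum_comm]
    refine Finset.sum_congr rfl fun j _ => ?_
    rw [← Finset.sum_mul]
    push_cast
    ring
  -- c is nonzero
  have hc0 : ∃ j0, c j0 ≠ 0 := by
    by_contra hall
    push_neg at hall
    have h1 := hGpos x hx
    rw [hsumQ x x] at h1
    have hall' : ∀ j, (∑ i, (G i j : ℚ) * x i) = 0 := hall
    simp only [hall', zero_mul, Finset.sum_const_zero] at h1
    exact lt_irrefl 0 h1
  obtain ⟨j0, hcj0⟩ := hc0
  by_cases hP : ∃ jj, ∀ 𝔷 : Fin l → ℂ,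
      (∑ j, ((c j : ℚ) : ℂ) * 𝔷 j) = 0 → (∑ j, ((d jj j : ℚ) : ℂ) * 𝔷 j) = 0
  · -- the hyperplane of x is contained in that of s jj: x is proportional to s jj
    obtain ⟨jj, hjj⟩ := hP
    have hkerQ : ∀ y : Fin l → ℚ, (∑ j, c j * y j) = 0 → (∑ j, d jj j * y j) = 0 := by
      intro y hy
      have h1 : (∑ j, ((c j : ℚ) : ℂ) * ((y j : ℚ) : ℂ)) = 0 := by exact_mod_cast hy
      have h2 : (∑ j, ((d jj j : ℚ) : ℂ) * ((y j : ℚ) : ℂ)) = 0 := hjj (fun j => ((y j : ℚ) : ℂ)) h1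
      exact_mod_cast h2
    -- proportionality relation between d jj and c
    have hrel : ∀ j, d jj j * c j0 = d jj j0 * c j := by
      intro j
      have hy : (∑ k, c k * ((if k = j then c j0 else 0) - (if k = j0 then c j else 0))) = 0 := by
        simp only [mul_sub, Finset.sum_sub_distrib, mul_ite, mul_zero,
          Finset.sum_ite_eq', Finset.mem_univ, if_true]
        ring
      have := hkerQ _ hy
      simp only [mul_sub, Finset.sum_sub_distrib, mul_ite, mul_zero,
        Finset.sum_ite_eq', Finset.mem_univ, if_true] at this
      linarith
    -- d jj is nonzero
    have hd0 : ∃ j1, d jj j1 ≠ 0 := by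
      by_contra hall
      push_neg at hall
      have h1 := hGpos (s jj) (hs0 jj)
      rw [hsumQ (s jj) (s jj)] at h1
      have hall' : ∀ j, (∑ i, (G i j : ℚ) * s jj i) = 0 := hall
      simp only [hall', zero_mul, Finset.sum_const_zero] at h1
      exact lt_irrefl 0 h1
    obtain ⟨j1, hdj1⟩ := hd0
    have hdj0 : d jj j0 ≠ 0 := by
      intro h0
      have := hrel j1
      rw [h0, zero_mul] at this
      exact hdj1 (by
        rcases mul_eq_zero.mp this with h | h
        · exact h
        · exact absurd h hcj0)
    set t : ℚ := c j0 / d jj j0 with htdef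
    have ht : t ≠ 0 := div_ne_zero hcj0 hdj0
    have hct : ∀ j, c j = t * d jj j := by
      intro j
      rw [htdef]
      field_simp
      linarith [hrel j]
    -- the difference x - t • s jj is killed by G, hence zero
    have hw : ∀ j, (∑ i, (G i j : ℚ) * (x i - t * s jj i)) = 0 := by
      intro j
      have : (∑ i, (G i j : ℚ) * (x i - t * s jj i))
          = (∑ i, (G i j : ℚ) * x i) - t * (∑ i, (G i j : ℚ) * s jj i) := by
        rw [Finset.mul_sum, ← Finset.sum_sub_distrib]
        exact Finset.sum_congr rfl fun i _ => by ring
      rw [this]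
      show c j - t * d jj j = 0
      rw [hct j]
      ring
    have hwzero : (fun i => x i - t * s jj i) = 0 := by
      by_contra hne
      have h1 := hGpos _ hne
      rw [hsumQ] at h1
      simp only [hw, zero_mul, Finset.sum_const_zero] at h1
      exact lt_irrefl 0 h1
    refine ⟨jj, t, ht, funext fun i => ?_⟩
    have := congrFun hwzero i
    simp only [Pi.zero_apply, sub_eq_zero] at this
    simpa [Pi.smul_apply, smul_eq_mul] using this
  · -- otherwise, a line in the hyperplane gives a countable cover of ℂ: contradiction
    exfalso
    push_neg at hP
    obtain ⟨v, hv0, hv⟩ := stmt16_avoid (fun j => ((c j : ℚ) : ℂ))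
      (fun jj j => ((d jj j : ℚ) : ℂ)) (by
        intro jj
        obtain ⟨z, hz0, hz⟩ := hP jj
        exact ⟨z, hz0, hz⟩)
    have hg : Function.Surjective (fun p : Fin N × ℤ × ℤ =>
        (((p.2.1 : ℂ) * τ + (p.2.2 : ℂ)) / (∑ j, ((d p.1 j : ℚ) : ℂ) * v j))) := by
      intro z
      obtain ⟨jj, a, b, hab⟩ := hcover (fun j => z * v j) (by
        rw [hsumC x]
        have : (∑ j, ((c j : ℚ) : ℂ) * (z * v j))
            = z * ∑ j, ((c j : ℚ) : ℂ) * v j := by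
          rw [Finset.mul_sum]
          exact Finset.sum_congr rfl fun j _ => by ring
        show (∑ j, ((c j : ℚ) : ℂ) * (z * v j)) = 0
        rw [this, hv0, mul_zero])
      rw [hsumC (s jj)] at hab
      have hzd : z * (∑ j, ((d jj j : ℚ) : ℂ) * v j) = (a : ℂ) * τ + (b : ℂ) := by
        rw [← hab, Finset.mul_sum]
        show (∑ j, z * (((d jj j : ℚ) : ℂ) * v j)) = ∑ j, ((d jj j : ℚ) : ℂ) * (z * v j)
        exact Finset.sum_congr rfl fun j _ => by ring
      refine ⟨(jj, a, b), ?_⟩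
      simp only
      rw [div_eq_iff (hv jj)]
      exact hzd.symm
    have : Countable ℂ := hg.countable
    exact (@not_countable ℂ stmt16_uncountableC) this
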